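/- Let X be a Hilbert space and a : X × X → ℂ a bounded sesquilinear form of the shape a = c + k, where c is X-coercive (|c(u,u)| ≥ α‖u‖²) and k is compact (i.e., k(u,v) = ⟨Ku, v⟩ with K : X → X compact). If the problem a(u,v) = 0 for all v implies u = 0 (injectivity), then a satisfies an inf-sup condition: there exists γ > 0 such that sup_{v≠0} |a(u,v)|/‖v‖ ≥ γ‖u‖ for all u ∈ X. -/

import Mathlib

open scoped ComplexConjugate
open Filter Topology Metric

/-- Fredholm alternative for coercive-plus-compact sesquilinear forms: if
`a = c + k` with `c` coercive and `k` induced by a compact operator `K`, and the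
problem `a(u,·) = 0` only has the trivial solution, then `a` satisfies a
continuous inf-sup condition. -/
theorem coercive_plus_compact_injective_infSup
    (X : Type*) [NormedAddCommGroup X] [InnerProductSpace ℂ X] [CompleteSpace X]
    (a c k : X → X → ℂ)
    (ha : ∀ u v : X, a u v = c u v + k u v)
    (α : ℝ) (hα : 0 < α) (hcoer : ∀ u : X, α * ‖u‖ ^ 2 ≤ ‖c u u‖)
    (K : X →L[ℂ] X) (hKcompact : IsCompactOperator K)
    (hk : ∀ u v : X, k u v = inner (𝕜 := ℂ) (K u) v)
    (M : ℝ) (hbdd : ∀ u v : X, ‖a u v‖ ≤ M * ‖u‖ * ‖v‖)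
    (hadd₁ : ∀ u u' v : X, a (u + u') v = a u v + a u' v)
    (hadd₂ : ∀ u v v' : X, a u (v + v') = a u v + a u v')
    (hinj : ∀ u : X, (∀ v : X, a u v = 0) → u = 0) :
    ∃ γ : ℝ, 0 < γ ∧ ∀ u : X, ∃ v : X, ‖v‖ ≤ 1 ∧ γ * ‖u‖ ≤ ‖a u v‖ := by
  by_contra hcon
  push_neg at hcon
  -- basic algebraic facts about `a`
  have hsub₁ : ∀ u u' v : X, a (u - u') v = a u v - a u' v := by
    intro u u' v
    have h := hadd₁ (u - u') u' v
    rw [sub_add_cancel] at h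
    exact eq_sub_of_add_eq h.symm
  have hsub₂ : ∀ u v v' : X, a u (v - v') = a u v - a u v' := by
    intro u v v'
    have h := hadd₂ u (v - v') v'
    rw [sub_add_cancel] at h
    exact eq_sub_of_add_eq h.symm
  -- real homogeneity in each slot
  have hsmul₁ : ∀ (r : ℝ) (u v : X), a (r • u) v = r • a u v := by
    intro r u v
    set f : X →+ ℂ := AddMonoidHom.mk' (fun u => a u v) (fun u u' => hadd₁ u u' v) with hf
    have hfc : Continuous f := by
      refine (LipschitzWith.of_dist_le_mul (K := Real.toNNReal (M * ‖v‖)) ?_).continuous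
      intro x y
      have h1 : dist (f x) (f y) = ‖a (x - y) v‖ := by
        simp [hf, AddMonoidHom.mk'_apply, dist_eq_norm, hsub₁]
      rw [h1, dist_eq_norm]
      calc ‖a (x - y) v‖ ≤ M * ‖x - y‖ * ‖v‖ := hbdd _ _
        _ = (M * ‖v‖) * ‖x - y‖ := by ring
        _ ≤ Real.toNNReal (M * ‖v‖) * ‖x - y‖ := by
            have : (M * ‖v‖) ≤ (Real.toNNReal (M * ‖v‖) : ℝ) := Real.le_coe_toNNReal _
            exact mul_le_mul_of_nonneg_right this (norm_nonneg _)
    exact map_real_smul f hfc r u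
  have hsmul₂ : ∀ (r : ℝ) (u v : X), a u (r • v) = r • a u v := by
    intro r u v
    set f : X →+ ℂ := AddMonoidHom.mk' (fun w => a u w) (fun w w' => hadd₂ u w w') with hf
    have hfc : Continuous f := by
      refine (LipschitzWith.of_dist_le_mul (K := Real.toNNReal (M * ‖u‖)) ?_).continuous
      intro x y
      have h1 : dist (f x) (f y) = ‖a u (x - y)‖ := by
        simp [hf, AddMonoidHom.mk'_apply, dist_eq_norm, hsub₂]
      rw [h1, dist_eq_norm]
      calc ‖a u (x - y)‖ ≤ M * ‖u‖ * ‖x - y‖ := hbdd _ _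
        _ ≤ Real.toNNReal (M * ‖u‖) * ‖x - y‖ := by
            have : (M * ‖u‖) ≤ (Real.toNNReal (M * ‖u‖) : ℝ) := Real.le_coe_toNNReal _
            exact mul_le_mul_of_nonneg_right this (norm_nonneg _)
    exact map_real_smul f hfc r v
  have ha0₂ : ∀ u : X, a u 0 = 0 := by
    intro u
    have := hadd₂ u 0 0
    simpa using this.symm
  -- choose the bad sequence
  choose u hu using fun n : ℕ => hcon ((n : ℝ) + 1)⁻¹ (by positivity)
  have hupos : ∀ n, 0 < ‖u n‖ := by
    intro n
    have h := hu n 0 (by simp)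
    rw [ha0₂] at h
    simp only [norm_zero] at h
    rcases (norm_nonneg (u n)).lt_or_eq with hpos | heq
    · exact hpos
    · exfalso; rw [← heq] at h; simp at h
  set w : ℕ → X := fun n => (‖u n‖⁻¹ : ℝ) • u n with hwdef
  have hwnorm : ∀ n, ‖w n‖ = 1 := by
    intro n
    rw [hwdef]
    simp only [norm_smul, Real.norm_eq_abs, abs_inv, abs_norm]
    rw [inv_mul_cancel₀ (hupos n).ne']
  -- the normalized sequence satisfies a uniform smallness bound
  have hbw : ∀ n (v : X), ‖a (w n) v‖ ≤ ((n : ℝ) + 1)⁻¹ * ‖v‖ := by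
    intro n v
    rcases eq_or_ne v 0 with rfl | hv
    · rw [ha0₂]; simp
    · have hv1 : ‖(‖v‖⁻¹ : ℝ) • v‖ ≤ 1 := by
        simp only [norm_smul, Real.norm_eq_abs, abs_inv, abs_norm]
        rw [inv_mul_cancel₀ (norm_ne_zero_iff.mpr hv)]
      have h1 : ‖a (u n) ((‖v‖⁻¹ : ℝ) • v)‖ ≤ ((n : ℝ) + 1)⁻¹ * ‖u n‖ :=
        (hu n _ hv1).le
      have h2 : a (w n) v = (‖u n‖⁻¹ * ‖v‖ : ℝ) • a (u n) ((‖v‖⁻¹ : ℝ) • v) := by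
        have e1 : w n = (‖u n‖⁻¹ : ℝ) • u n := rfl
        rw [e1, hsmul₁, hsmul₂, smul_smul]
        congr 1
        have hvne : ‖v‖ ≠ 0 := norm_ne_zero_iff.mpr hv
        have hune : ‖u n‖ ≠ 0 := (hupos n).ne'
        field_simp
      rw [h2, norm_smul, Real.norm_eq_abs]
      have hun := hupos n
      have hvpos : 0 < ‖v‖ := norm_pos_iff.mpr hv
      rw [abs_of_nonneg (by positivity)]
      calc ‖u n‖⁻¹ * ‖v‖ * ‖a (u n) ((‖v‖⁻¹ : ℝ) • v)‖
          ≤ ‖u n‖⁻¹ * ‖v‖ * (((n : ℝ) + 1)⁻¹ * ‖u n‖) := by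
            exact mul_le_mul_of_nonneg_left h1 (by positivity)
        _ = ((n : ℝ) + 1)⁻¹ * ‖v‖ := by field_simp
  -- extract a subsequence along which K (w n) converges
  have hKc : IsCompact (closure (⇑(K.toLinearMap) '' closedBall (0 : X) 1)) :=
    IsCompactOperator.isCompact_closure_image_closedBall (𝕜₁ := ℂ) hKcompact 1
  have hmem : ∀ n, K (w n) ∈ closure (⇑(K.toLinearMap) '' closedBall (0 : X) 1) := by
    intro n
    apply subset_closure
    exact ⟨w n, by simp [hwnorm n], rfl⟩
  obtain ⟨y, -, φ, hφ, hKlim⟩ := hKc.tendsto_subseq hmem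
  -- the subsequence w ∘ φ is Cauchy
  have hckey : ∀ m n : ℕ, α * ‖w m - w n‖ ^ 2 ≤
      2 * ((m : ℝ) + 1)⁻¹ + 2 * ((n : ℝ) + 1)⁻¹ + 2 * ‖K (w m) - K (w n)‖ := by
    intro m n
    set d := w m - w n with hd
    have hdnorm : ‖d‖ ≤ 2 := by
      calc ‖d‖ ≤ ‖w m‖ + ‖w n‖ := norm_sub_le _ _
        _ = 2 := by rw [hwnorm, hwnorm]; norm_num
    have hcd : c d d = a d d - inner (𝕜 := ℂ) (K d) d := by
      rw [← hk, ha]; ring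
    have hKd : K d = K (w m) - K (w n) := by rw [hd, map_sub]
    have hadd : ‖a d d‖ ≤ 2 * ((m : ℝ) + 1)⁻¹ + 2 * ((n : ℝ) + 1)⁻¹ := by
      have h1 : a d d = (a (w m) (w m) - a (w m) (w n)) - (a (w n) (w m) - a (w n) (w n)) := by
        rw [hd, hsub₁, hsub₂, hsub₂]
      rw [h1]
      have b1 := hbw m (w m); have b2 := hbw m (w n)
      have b3 := hbw n (w m); have b4 := hbw n (w n)
      rw [hwnorm, mul_one] at b1 b2 b3 b4
      calc ‖a (w m) (w m) - a (w m) (w n) - (a (w n) (w m) - a (w n) (w n))‖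
          ≤ ‖a (w m) (w m) - a (w m) (w n)‖ + ‖a (w n) (w m) - a (w n) (w n)‖ := norm_sub_le _ _
        _ ≤ (‖a (w m) (w m)‖ + ‖a (w m) (w n)‖) + (‖a (w n) (w m)‖ + ‖a (w n) (w n)‖) :=
            add_le_add (norm_sub_le _ _) (norm_sub_le _ _)
        _ ≤ 2 * ((m : ℝ) + 1)⁻¹ + 2 * ((n : ℝ) + 1)⁻¹ := by linarith
    have hinner : ‖inner (𝕜 := ℂ) (K d) d‖ ≤ 2 * ‖K (w m) - K (w n)‖ := by
      calc ‖inner (𝕜 := ℂ) (K d) d‖ ≤ ‖K d‖ * ‖d‖ := norm_inner_le_norm _ _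
        _ ≤ ‖K d‖ * 2 := mul_le_mul_of_nonneg_left hdnorm (norm_nonneg _)
        _ = 2 * ‖K (w m) - K (w n)‖ := by rw [hKd]; ring
    calc α * ‖d‖ ^ 2 ≤ ‖c d d‖ := hcoer d
      _ = ‖a d d - inner (𝕜 := ℂ) (K d) d‖ := by rw [hcd]
      _ ≤ ‖a d d‖ + ‖inner (𝕜 := ℂ) (K d) d‖ := norm_sub_le _ _
      _ ≤ 2 * ((m : ℝ) + 1)⁻¹ + 2 * ((n : ℝ) + 1)⁻¹ + 2 * ‖K (w m) - K (w n)‖ := by linarith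
  have hcauchy : CauchySeq (fun i => w (φ i)) := by
    rw [Metric.cauchySeq_iff]
    intro ε hε
    set δ := α * ε ^ 2 / 8 with hδdef
    have hδ : 0 < δ := by positivity
    have hKcau : CauchySeq (fun i => K (w (φ i))) := hKlim.cauchySeq
    rw [Metric.cauchySeq_iff] at hKcau
    obtain ⟨N₁, hN₁⟩ := hKcau δ hδ
    obtain ⟨N₂, hN₂⟩ : ∃ N : ℕ, ∀ n ≥ N, 2 * ((φ n : ℝ) + 1)⁻¹ < δ := by
      obtain ⟨N, hN⟩ := exists_nat_gt (2 / δ)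
      refine ⟨N, fun n hn => ?_⟩
      have hφn : (N : ℝ) ≤ (φ n : ℝ) := by
        exact_mod_cast le_trans hn (hφ.le_apply)
      have h2 : (0 : ℝ) < (φ n : ℝ) + 1 := by positivity
      have h1 : 2 / ((φ n : ℝ) + 1) < δ := by
        rw [div_lt_iff₀ h2]
        have h3 : 2 / δ < (φ n : ℝ) + 1 := by linarith [hN]
        rw [div_lt_iff₀ hδ] at h3
        linarith [h3]
      calc 2 * ((φ n : ℝ) + 1)⁻¹ = 2 / ((φ n : ℝ) + 1) := by ring
        _ < δ := h1
    refine ⟨max N₁ N₂, fun m hm n hn => ?_⟩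
    have h1 := hN₁ m (le_trans (le_max_left _ _) hm) n (le_trans (le_max_left _ _) hn)
    have h2 := hN₂ m (le_trans (le_max_right _ _) hm)
    have h3 := hN₂ n (le_trans (le_max_right _ _) hn)
    rw [dist_eq_norm] at h1 ⊢
    have hkey := hckey (φ m) (φ n)
    have h4 : α * ‖w (φ m) - w (φ n)‖ ^ 2 < 4 * δ := by
      have h5 : 2 * ‖K (w (φ m)) - K (w (φ n))‖ < 2 * δ :=
        mul_lt_mul_of_pos_left h1 (by norm_num)
      linarith [hkey, h2, h3, h5]
    rw [hδdef] at h4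
    by_contra hge
    push_neg at hge
    have h6 : ε ^ 2 ≤ ‖w (φ m) - w (φ n)‖ ^ 2 := by
      have := mul_self_le_mul_self hε.le hge
      nlinarith
    have h7 : α * ε ^ 2 ≤ α * ‖w (φ m) - w (φ n)‖ ^ 2 :=
      mul_le_mul_of_nonneg_left h6 hα.le
    have h8 : 0 < α * ε ^ 2 := by positivity
    linarith
  -- get the limit
  obtain ⟨z, hz⟩ := cauchySeq_tendsto_of_complete hcauchy
  have hznorm : ‖z‖ = 1 := by
    have : Tendsto (fun i => ‖w (φ i)‖) atTop (𝓝 ‖z‖) := hz.norm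
    have h1 : Tendsto (fun _ : ℕ => (1 : ℝ)) atTop (𝓝 ‖z‖) := by
      simpa only [hwnorm] using this
    exact tendsto_nhds_unique h1 tendsto_const_nhds
  -- z is a nontrivial solution, contradiction
  have hzero : ∀ v : X, a z v = 0 := by
    intro v
    have hb : ∀ i : ℕ, ‖a z v‖ ≤ M * ‖z - w (φ i)‖ * ‖v‖ + ((φ i : ℝ) + 1)⁻¹ * ‖v‖ := by
      intro i
      have h1 : a z v = a (z - w (φ i)) v + a (w (φ i)) v := by
        rw [hsub₁]; ring
      rw [h1]
      calc ‖a (z - w (φ i)) v + a (w (φ i)) v‖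
          ≤ ‖a (z - w (φ i)) v‖ + ‖a (w (φ i)) v‖ := norm_add_le _ _
        _ ≤ M * ‖z - w (φ i)‖ * ‖v‖ + ((φ i : ℝ) + 1)⁻¹ * ‖v‖ :=
            add_le_add (hbdd _ _) (hbw _ _)
    have htend : Tendsto (fun i => M * ‖z - w (φ i)‖ * ‖v‖ + ((φ i : ℝ) + 1)⁻¹ * ‖v‖)
        atTop (𝓝 0) := by
      have t1 : Tendsto (fun i => ‖z - w (φ i)‖) atTop (𝓝 0) := by
        have := (tendsto_const_nhds (x := z) (f := atTop (α := ℕ))).sub hz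
        simpa using this.norm
      have t2 : Tendsto (fun i => ((φ i : ℝ) + 1)⁻¹) atTop (𝓝 0) := by
        have : Tendsto (fun n : ℕ => ((n : ℝ) + 1)⁻¹) atTop (𝓝 0) := by
          simpa [one_div] using (tendsto_one_div_add_atTop_nhds_zero_nat :
            Tendsto (fun n : ℕ => 1 / ((n : ℝ) + 1)) atTop (𝓝 0))
        exact this.comp hφ.tendsto_atTop
      have := ((t1.const_mul M).mul_const ‖v‖).add (t2.mul_const ‖v‖)
      simpa using this
    have := ge_of_tendsto' htend hb
    exact norm_le_zero_iff.mp this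
  have := hinj z hzero
  rw [this] at hznorm
  simp at hznorm
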